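/- If μ* is an upper quasi-density on ℕ, then the image of μ* is the entire interval [0,1]: for every a ∈ [0,1] there exists X ⊆ ℕ with μ*(X) = a. -/

import Mathlib

/-- `k·X + h = {k*x + h : x ∈ X}` -/
def affImage (k h : ℕ) (X : Set ℕ) : Set ℕ := (fun x => k * x + h) '' X


def v2 (n : ℕ) : ℕ := padicValNat 2 n

lemma v2_mul (N m : ℕ) (hm : m ≠ 0) : v2 (2 ^ N * m) = N + v2 m := by
  unfold v2
  haveI : Fact (Nat.Prime 2) := ⟨Nat.prime_two⟩
  rw [padicValNat.mul (by positivity) hm, padicValNat.prime_pow]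

lemma v2_mul_odd (j t : ℕ) : v2 (2 ^ j * (2 * t + 1)) = j := by
  haveI : Fact (Nat.Prime 2) := ⟨Nat.prime_two⟩
  rw [v2_mul j _ (by omega)]
  have : padicValNat 2 (2 * t + 1) = 0 :=
    padicValNat.eq_zero_of_not_dvd (by omega)
  unfold v2; omega

lemma v2_decomp (n : ℕ) (hn : n ≠ 0) : ∃ t, n = 2 ^ v2 n * (2 * t + 1) := by
  haveI : Fact (Nat.Prime 2) := ⟨Nat.prime_two⟩
  have h1 : 2 ^ (n.factorization 2) * (n / 2 ^ (n.factorization 2)) = n :=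
    Nat.ordProj_mul_ordCompl_eq_self n 2
  have h2 : ¬ 2 ∣ (n / 2 ^ (n.factorization 2)) := Nat.not_dvd_ordCompl Nat.prime_two hn
  have h3 : n.factorization 2 = v2 n := Nat.factorization_def n Nat.prime_two
  obtain ⟨t, ht⟩ : ∃ t, n / 2 ^ (n.factorization 2) = 2 * t + 1 := by
    have := Nat.odd_iff.mpr (by omega : (n / 2 ^ (n.factorization 2)) % 2 = 1)
    obtain ⟨t, ht⟩ := this; exact ⟨t, by omega⟩
  refine ⟨t, ?_⟩
  rw [← h3]
  conv_lhs => rw [← h1, ht]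

/-- sets built from a set of "digit positions" (positions are ≥ 1) -/
def XS (S : Set ℕ) : Set ℕ := {x | v2 (x + 1) + 1 ∈ S}

lemma B_eq (j : ℕ) (hj : 1 ≤ j) :
    {x : ℕ | v2 (x + 1) = j} = affImage (2 ^ (j + 1)) (2 ^ j - 1) Set.univ := by
  have hp : 1 ≤ 2 ^ j := Nat.one_le_two_pow
  ext x
  simp only [Set.mem_setOf_eq, affImage, Set.image_univ, Set.mem_range]
  constructor
  · intro h
    obtain ⟨t, ht⟩ := v2_decomp (x + 1) (by omega)
    rw [h] at ht
    exact ⟨t, by rw [pow_succ]; ring_nf; ring_nf at ht; omega⟩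
  · rintro ⟨t, rfl⟩
    have : 2 ^ (j + 1) * t + (2 ^ j - 1) + 1 = 2 ^ j * (2 * t + 1) := by
      rw [pow_succ]; ring_nf; omega
    rw [this, v2_mul_odd]

lemma B0_eq : {x : ℕ | v2 (x + 1) = 0} = affImage 2 2 Set.univ ∪ {0} := by
  ext x
  simp only [Set.mem_setOf_eq, affImage, Set.image_univ, Set.mem_union, Set.mem_range,
    Set.mem_singleton_iff]
  constructor
  · intro h
    obtain ⟨t, ht⟩ := v2_decomp (x + 1) (by omega)
    rw [h] at ht
    simp at ht
    rcases Nat.eq_zero_or_pos t with rfl | hpos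
    · right; omega
    · left; exact ⟨t - 1, by omega⟩
  · rintro (⟨t, rfl⟩ | rfl)
    · have : 2 * t + 2 + 1 = 2 ^ 0 * (2 * (t + 1) + 1) := by ring
      rw [this, v2_mul_odd]
    · have : (0 : ℕ) + 1 = 2 ^ 0 * (2 * 0 + 1) := by ring
      rw [this, v2_mul_odd]

lemma XS_split (S : Set ℕ) (N : ℕ) :
    XS S = XS (S ∩ Set.Iic N) ∪ XS (S ∩ Set.Ioi N) := by
  ext x
  simp only [XS, Set.mem_setOf_eq, Set.mem_union, Set.mem_inter_iff, Set.mem_Iic, Set.mem_Ioi]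
  constructor
  · intro h
    rcases le_or_gt (v2 (x + 1) + 1) N with hh | hh
    exacts [Or.inl ⟨h, hh⟩, Or.inr ⟨h, hh⟩]
  · rintro (⟨h, -⟩ | ⟨h, -⟩) <;> exact h
  
lemma XS_compl (S : Set ℕ) : (XS S)ᶜ = XS Sᶜ := rfl

lemma XS_singleton (S : Set ℕ) (N : ℕ) (h : N + 1 ∈ S) :
    XS (S ∩ {N + 1}) = {x : ℕ | v2 (x + 1) = N} := by
  ext x
  simp only [XS, Set.mem_setOf_eq, Set.mem_inter_iff, Set.mem_singleton_iff]
  constructor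
  · rintro ⟨-, h2⟩; omega
  · intro h2; exact ⟨by rwa [h2], by omega⟩

lemma XS_singleton' (S : Set ℕ) (N : ℕ) (h : N + 1 ∉ S) :
    XS (S ∩ {N + 1}) = ∅ := by
  ext x
  simp only [XS, Set.mem_setOf_eq, Set.mem_inter_iff, Set.mem_singleton_iff, Set.mem_empty_iff_false]
  exact ⟨fun ⟨h1, h2⟩ => h (h2 ▸ h1), False.elim⟩

lemma XS_Iic_zero (S : Set ℕ) : XS (S ∩ Set.Iic 0) = ∅ := by
  ext x
  simp only [XS, Set.mem_setOf_eq, Set.mem_inter_iff, Set.mem_Iic, Set.mem_empty_iff_false]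
  exact ⟨fun ⟨_, h⟩ => by omega, False.elim⟩

lemma XS_Iic_succ (S : Set ℕ) (N : ℕ) :
    XS (S ∩ Set.Iic (N + 1)) = XS (S ∩ Set.Iic N) ∪ XS (S ∩ {N + 1}) := by
  ext x
  simp only [XS, Set.mem_setOf_eq, Set.mem_union, Set.mem_inter_iff, Set.mem_Iic,
    Set.mem_singleton_iff]
  constructor
  · rintro ⟨h1, h2⟩
    rcases Nat.lt_or_ge (v2 (x+1) + 1) (N+1) with h | h
    · exact Or.inl ⟨h1, by omega⟩
    · exact Or.inr ⟨h1, by omega⟩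
  · rintro (⟨h1, h2⟩ | ⟨h1, h2⟩) <;> exact ⟨h1, by omega⟩

lemma XS_tail (S : Set ℕ) (N : ℕ) :
    XS (S ∩ Set.Ioi N) = affImage (2 ^ N) (2 ^ N - 1) (XS {i | i + N ∈ S}) := by
  have hp : 1 ≤ 2 ^ N := Nat.one_le_two_pow
  ext y
  simp only [XS, Set.mem_setOf_eq, Set.mem_inter_iff, Set.mem_Ioi, affImage, Set.mem_image]
  constructor
  · rintro ⟨h1, h2⟩
    -- v2 (y+1) ≥ N
    obtain ⟨t, ht⟩ := v2_decomp (y + 1) (by omega)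
    set v := v2 (y + 1) with hv
    refine ⟨2 ^ (v - N) * (2 * t + 1) - 1, ?_, ?_⟩
    · show v2 (2 ^ (v - N) * (2 * t + 1) - 1 + 1) + 1 + N ∈ S
      have hg : 1 ≤ 2 ^ (v - N) * (2 * t + 1) := Nat.one_le_iff_ne_zero.mpr (by positivity)
      rw [Nat.sub_add_cancel hg, v2_mul_odd]
      have : v - N + 1 + N = v + 1 := by omega
      rw [this]; exact h1
    · have hg : 1 ≤ 2 ^ (v - N) * (2 * t + 1) := Nat.one_le_iff_ne_zero.mpr (by positivity)
      have hvN : v = N + (v - N) := by omega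
      have : y + 1 = 2 ^ N * (2 ^ (v - N) * (2 * t + 1)) := by
        rw [ht]; conv_lhs => rw [hvN]
        rw [pow_add]; ring
      set M := 2 ^ (v - N) * (2 * t + 1) with hM
      have h5 : 2 ^ N * (M - 1) + 2 ^ N = 2 ^ N * M := by
        rcases M with _ | m
        · omega
        · simp [Nat.mul_succ]
      omega
  · rintro ⟨x, hx, rfl⟩
    have hms : 2 ^ N * (x + 1) = 2 ^ N * x + 2 ^ N := by ring
    have : 2 ^ N * x + (2 ^ N - 1) + 1 = 2 ^ N * (x + 1) := by omega
    rw [this, v2_mul (N) (x+1) (by omega)]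
    exact ⟨by have := hx; simpa [Nat.add_comm, Nat.add_assoc, Nat.add_left_comm] using hx, by omega⟩





noncomputable def w (S : Set ℕ) (i : ℕ) : ℝ := S.indicator (fun i => ((2:ℝ) ^ i)⁻¹) i

noncomputable def sig (S : Set ℕ) (N : ℕ) : ℝ := ∑ i ∈ Finset.Icc 1 N, w S i

lemma w_add_w_compl (S : Set ℕ) (i : ℕ) : w S i + w Sᶜ i = ((2:ℝ) ^ i)⁻¹ := by
  unfold w Set.indicator
  by_cases h : i ∈ S <;> simp [h]

lemma sig_add_sig_compl (S : Set ℕ) (N : ℕ) :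
    sig S N + sig Sᶜ N = 1 - ((2:ℝ) ^ N)⁻¹ := by
  unfold sig
  rw [← Finset.sum_add_distrib]
  induction N with
  | zero => simp
  | succ n ih =>
    rw [Finset.sum_Icc_succ_top (by omega), ih, w_add_w_compl]
    have : (0:ℝ) < 2 ^ n := by positivity
    field_simp
    ring


lemma digit_step (a : ℝ) (n : ℕ) :
    (⌊a * 2 ^ (n+1)⌋ = 2 * ⌊a * 2 ^ n⌋ ∧ ¬ Odd ⌊a * 2 ^ (n+1)⌋) ∨
    (⌊a * 2 ^ (n+1)⌋ = 2 * ⌊a * 2 ^ n⌋ + 1 ∧ Odd ⌊a * 2 ^ (n+1)⌋) := by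
  set m := ⌊a * 2 ^ n⌋ with hm
  have e : a * 2 ^ (n+1) = 2 * (a * 2 ^ n) := by ring
  have hlo : 2 * m ≤ ⌊a * 2 ^ (n+1)⌋ := by
    rw [Int.le_floor, e]
    push_cast
    have := Int.floor_le (a * 2 ^ n)
    linarith
  have hhi : ⌊a * 2 ^ (n+1)⌋ < 2 * m + 2 := by
    rw [Int.floor_lt, e]
    push_cast
    have := Int.lt_floor_add_one (a * 2 ^ n)
    linarith
  rcases (by omega : ⌊a * 2 ^ (n+1)⌋ = 2 * m ∨ ⌊a * 2 ^ (n+1)⌋ = 2 * m + 1) with h | h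
  · exact Or.inl ⟨h, by rw [Int.odd_iff]; omega⟩
  · exact Or.inr ⟨h, by rw [Int.odd_iff]; omega⟩

lemma sig_digits (a : ℝ) (ha0 : 0 ≤ a) (ha1 : a < 1) (N : ℕ) :
    sig {i | Odd ⌊a * 2 ^ i⌋} N = (⌊a * 2 ^ N⌋ : ℝ) / 2 ^ N := by
  induction N with
  | zero =>
    have h0 : ⌊a⌋ = 0 := by
      rw [Int.floor_eq_zero_iff]
      exact ⟨ha0, ha1⟩
    simp [sig, h0]
  | succ n ih =>
    unfold sig at *
    rw [Finset.sum_Icc_succ_top (by omega), ih]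
    have h2n : (0:ℝ) < 2 ^ n := by positivity
    rcases digit_step a n with ⟨h, hodd⟩ | ⟨h, hodd⟩
    · have hw : w {i | Odd ⌊a * 2 ^ i⌋} (n+1) = 0 :=
        Set.indicator_of_notMem (by simpa using hodd) _
      rw [hw, h]
      push_cast
      field_simp
      ring
    · have hw : w {i | Odd ⌊a * 2 ^ i⌋} (n+1) = ((2:ℝ) ^ (n+1))⁻¹ :=
        Set.indicator_of_mem (by simpa using hodd) _
      rw [hw, h]
      push_cast
      field_simp
      ring


section MuBounds
variable (μ : Set ℕ → ℝ)

lemma mu_empty (h4 : ∀ (X : Set ℕ) (h k : ℕ), 0 < h → 0 < k →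
      μ (affImage k h X) = (1 / (k : ℝ)) * μ X) : μ ∅ = 0 := by
  have := h4 ∅ 1 2 one_pos two_pos
  simp [affImage] at this
  linarith

lemma mu_zero (h4 : ∀ (X : Set ℕ) (h k : ℕ), 0 < h → 0 < k →
      μ (affImage k h X) = (1 / (k : ℝ)) * μ X) : μ {0} = 0 := by
  have e1 : affImage 1 1 {0} = ({1} : Set ℕ) := by simp [affImage]
  have e2 : affImage 2 1 {0} = ({1} : Set ℕ) := by simp [affImage]
  have t1 := h4 {0} 1 1 one_pos one_pos
  have t2 := h4 {0} 1 2 one_pos two_pos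
  rw [e1] at t1; rw [e2] at t2
  norm_num at t1 t2
  linarith

variable (h1 : μ Set.univ = 1)
    (h2 : ∀ X : Set ℕ, μ X ≤ 1)
    (h3 : ∀ X Y : Set ℕ, μ (X ∪ Y) ≤ μ X + μ Y)
    (h4 : ∀ (X : Set ℕ) (h k : ℕ), 0 < h → 0 < k →
      μ (affImage k h X) = (1 / (k : ℝ)) * μ X)

include h1 h2 h3 h4 in
lemma mu_B (j : ℕ) : μ {x | v2 (x + 1) = j} ≤ ((2:ℝ) ^ (j + 1))⁻¹ := by
  rcases j with _ | j
  · rw [B0_eq]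
    have hb := h3 (affImage 2 2 Set.univ) {0}
    have ha := h4 Set.univ 2 2 two_pos two_pos
    have hz := mu_zero μ h4
    rw [h1] at ha
    rw [ha, hz] at hb
    norm_num at hb ⊢
    linarith
  · rw [B_eq (j + 1) (by omega)]
    rw [h4 Set.univ (2 ^ (j + 1) - 1) (2 ^ (j + 2))
      (by have : (1:ℕ) ≤ 2 ^ (j+1) := Nat.one_le_two_pow; have : (2:ℕ) ≤ 2 ^ (j+1) := by
            calc (2:ℕ) = 2 ^ 1 := rfl
            _ ≤ 2 ^ (j+1) := Nat.pow_le_pow_right (by norm_num) (by omega)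
          omega)
      (by positivity), h1]
    push_cast
    norm_num

include h1 h2 h3 h4 in
lemma mu_fin (S : Set ℕ) (N : ℕ) : μ (XS (S ∩ Set.Iic N)) ≤ sig S N := by
  induction N with
  | zero =>
    rw [XS_Iic_zero, mu_empty μ h4]
    simp [sig]
  | succ n ih =>
    rw [XS_Iic_succ]
    have hb := h3 (XS (S ∩ Set.Iic n)) (XS (S ∩ {n + 1}))
    have hsig : sig S (n + 1) = sig S n + w S (n + 1) := by
      unfold sig
      rw [Finset.sum_Icc_succ_top (by omega)]
    rw [hsig]
    by_cases hm : n + 1 ∈ S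
    · have hx := XS_singleton S n hm
      have hw : w S (n + 1) = ((2:ℝ) ^ (n + 1))⁻¹ := Set.indicator_of_mem hm _
      rw [hx] at hb
      have := mu_B μ h1 h2 h3 h4 n
      rw [hx, hw]
      linarith
    · have hx := XS_singleton' S n hm
      have hw : w S (n + 1) = 0 := Set.indicator_of_notMem hm _
      rw [hx, mu_empty μ h4] at hb
      rw [hx, hw]
      linarith

include h1 h2 h3 h4 in
lemma mu_tail (S : Set ℕ) (N : ℕ) (hN : 1 ≤ N) :
    μ (XS (S ∩ Set.Ioi N)) ≤ ((2:ℝ) ^ N)⁻¹ := by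
  rw [XS_tail]
  have hpow : (2:ℕ) ≤ 2 ^ N := by
    calc (2:ℕ) = 2 ^ 1 := rfl
    _ ≤ 2 ^ N := Nat.pow_le_pow_right (by norm_num) hN
  rw [h4 _ (2 ^ N - 1) (2 ^ N) (by omega) (by positivity)]
  have hq := h2 (XS {i | i + N ∈ S})
  have hc : (((2:ℕ) ^ N : ℕ) : ℝ) = (2:ℝ) ^ N := by push_cast; ring
  rw [hc, one_div]
  calc ((2:ℝ) ^ N)⁻¹ * μ (XS {i | i + N ∈ S}) ≤ ((2:ℝ) ^ N)⁻¹ * 1 :=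
        mul_le_mul_of_nonneg_left hq (by positivity)
  _ = ((2:ℝ) ^ N)⁻¹ := mul_one _

include h1 h2 h3 h4 in
lemma mu_upper (S : Set ℕ) (N : ℕ) (hN : 1 ≤ N) :
    μ (XS S) ≤ sig S N + ((2:ℝ) ^ N)⁻¹ := by
  conv_lhs => rw [XS_split S N]
  have hb := h3 (XS (S ∩ Set.Iic N)) (XS (S ∩ Set.Ioi N))
  have := mu_fin μ h1 h2 h3 h4 S N
  have := mu_tail μ h1 h2 h3 h4 S N hN
  linarith

include h1 h2 h3 h4 in
lemma mu_lower (S : Set ℕ) (N : ℕ) (hN : 1 ≤ N) :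
    sig S N ≤ μ (XS S) := by
  have hc := mu_upper μ h1 h2 h3 h4 Sᶜ N hN
  have hu : XS S ∪ XS Sᶜ = Set.univ := by
    rw [← XS_compl]
    exact Set.union_compl_self _
  have hb := h3 (XS S) (XS Sᶜ)
  rw [hu, h1] at hb
  have := sig_add_sig_compl S N
  linarith

end MuBounds

theorem stmt15 (μ : Set ℕ → ℝ)
    (h1 : μ Set.univ = 1)
    (h2 : ∀ X : Set ℕ, μ X ≤ 1)
    (h3 : ∀ X Y : Set ℕ, μ (X ∪ Y) ≤ μ X + μ Y)
    (h4 : ∀ (X : Set ℕ) (h k : ℕ), 0 < h → 0 < k →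
      μ (affImage k h X) = (1 / (k : ℝ)) * μ X) :
    ∀ a : ℝ, a ∈ Set.Icc (0 : ℝ) 1 → ∃ X : Set ℕ, μ X = a := by
  rintro a ⟨ha0, ha1⟩
  rcases eq_or_lt_of_le ha1 with rfl | ha1'
  · exact ⟨Set.univ, h1⟩
  set S : Set ℕ := {i | Odd ⌊a * 2 ^ i⌋} with hS
  refine ⟨XS S, ?_⟩
  have key : ∀ N : ℕ, 1 ≤ N → |μ (XS S) - a| ≤ ((2:ℝ) ^ N)⁻¹ := by
    intro N hN
    have hpos : (0:ℝ) < 2 ^ N := by positivity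
    have hsig := sig_digits a ha0 ha1' N
    have hup := mu_upper μ h1 h2 h3 h4 S N hN
    have hlo := mu_lower μ h1 h2 h3 h4 S N hN
    have hfl : (⌊a * 2 ^ N⌋ : ℝ) ≤ a * 2 ^ N := Int.floor_le _
    have hfl2 : a * 2 ^ N < (⌊a * 2 ^ N⌋ : ℝ) + 1 := Int.lt_floor_add_one _
    have e1 : sig S N ≤ a := by
      rw [hsig, div_le_iff₀ hpos]
      linarith
    have e2 : a ≤ sig S N + ((2:ℝ) ^ N)⁻¹ := by
      rw [hsig, div_add' _ _ _ (ne_of_gt hpos), le_div_iff₀ hpos,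
        inv_mul_cancel₀ (ne_of_gt hpos)]
      linarith
    rw [abs_le]
    constructor <;> linarith
  have habs : |μ (XS S) - a| ≤ 0 := by
    refine le_of_forall_pos_le_add ?_
    intro ε hε
    obtain ⟨N, hN⟩ := pow_unbounded_of_one_lt (ε⁻¹) (by norm_num : (1:ℝ) < 2)
    have hN' : ε⁻¹ < 2 ^ (N + 1) :=
      hN.trans_le (pow_le_pow_right₀ (by norm_num) (Nat.le_succ N))
    have h2N : ((2:ℝ) ^ (N + 1))⁻¹ ≤ ε := by
      have := inv_strictAnti₀ (inv_pos.mpr hε) hN'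
      rw [inv_inv] at this
      exact this.le
    calc |μ (XS S) - a| ≤ ((2:ℝ) ^ (N + 1))⁻¹ := key (N + 1) (by omega)
    _ ≤ ε := h2N
    _ ≤ 0 + ε := by linarith
  have := abs_nonneg (μ (XS S) - a)
  have : |μ (XS S) - a| = 0 := le_antisymm habs this
  rw [abs_eq_zero, sub_eq_zero] at this
  exact this
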